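/- arXiv:2510.06817 — 3 statements merged into one kernel-verified Lean document; each statement's English description precedes it below -/
import Mathlib

section
/- The function g(x) = (2x)^{1/(x+1)} · (1 + 1/x) is strictly decreasing on the interval [1, ∞). -/
/-- The function g(x) = (2x)^{1/(x+1)} · (1 + 1/x) is strictly decreasing on [1, ∞). -/
theorem stmt_0 :
    StrictAntiOn (fun x : ℝ => (2 * x) ^ (1 / (x + 1)) * (1 + x⁻¹)) (Set.Ici (1 : ℝ)) := by
  apply strictAntiOn_of_deriv_neg (convex_Ici 1)
  · apply ContinuousOn.mul
    · apply ContinuousOn.rpow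
      · fun_prop
      · apply ContinuousOn.div continuousOn_const (by fun_prop)
        intro x hx
        have : (1:ℝ) ≤ x := hx
        nlinarith
      · intro x hx
        left
        have : (1:ℝ) ≤ x := hx
        nlinarith
    · apply ContinuousOn.add continuousOn_const
      apply ContinuousOn.inv₀ (by fun_prop)
      intro x hx
      have : (1:ℝ) ≤ x := hx
      linarith
  · intro x hx
    rw [interior_Ici] at hx
    have hx1 : (1:ℝ) < x := hx
    have hx0 : (0:ℝ) < x := by linarith
    have hx0' : x ≠ 0 := ne_of_gt hx0
    have hxp1 : x + 1 ≠ 0 := by positivity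
    have h2x : (0:ℝ) < 2 * x := by linarith
    -- equality with exp form on a neighborhood
    have heq : (fun y : ℝ => (2 * y) ^ (1 / (y + 1)) * (1 + y⁻¹))
        =ᶠ[nhds x] (fun y : ℝ => Real.exp (Real.log (2 * y) / (y + 1)) * (1 + y⁻¹)) := by
      filter_upwards [isOpen_Ioi.mem_nhds (show x ∈ Set.Ioi (0:ℝ) from hx0)] with y hy
      have hy0 : (0:ℝ) < 2 * y := by simp at hy; linarith
      rw [Real.rpow_def_of_pos hy0, mul_one_div]
    -- derivative of exp form
    have hlog : HasDerivAt (fun y : ℝ => Real.log (2 * y)) (2 / (2 * x)) x := by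
      have h2 : HasDerivAt (fun y : ℝ => 2 * y) 2 x := by
        simpa using (hasDerivAt_id x).const_mul 2
      exact h2.log (ne_of_gt h2x)
    have hden : HasDerivAt (fun y : ℝ => y + 1) 1 x := by
      simpa using (hasDerivAt_id x).add_const 1
    have hq : HasDerivAt (fun y : ℝ => Real.log (2 * y) / (y + 1))
        ((2 / (2 * x) * (x + 1) - Real.log (2 * x) * 1) / (x + 1) ^ 2) x :=
      hlog.div hden hxp1
    have hexp := hq.exp
    have hv : HasDerivAt (fun y : ℝ => 1 + y⁻¹) (-(x ^ 2)⁻¹) x := by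
      simpa using (hasDerivAt_inv hx0').const_add 1
    have hg := hexp.mul hv
    rw [heq.deriv_eq, (show HasDerivAt (fun y : ℝ => Real.exp (Real.log (2 * y) / (y + 1)) * (1 + y⁻¹)) _ x from hg).deriv]
    set E := Real.exp (Real.log (2 * x) / (x + 1)) with hE
    have hEpos : 0 < E := Real.exp_pos _
    have hkey : E * ((2 / (2 * x) * (x + 1) - Real.log (2 * x) * 1) / (x + 1) ^ 2) * (1 + x⁻¹)
        + E * (-(x ^ 2)⁻¹) = E * (-(Real.log (2 * x) / (x * (x + 1)))) := by
      field_simp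
      ring
    rw [hkey]
    apply mul_neg_of_pos_of_neg hEpos
    have : 0 < Real.log (2 * x) / (x * (x + 1)) :=
      div_pos (Real.log_pos (by linarith)) (by positivity)
    linarith
end

section
/- For every positive integer d and every real x > 4d·log(4d), one has (x+1)² > d·(x+2)·log(2x). Consequently the function h_d(x) = (x+2)·g(x)^d, where g(x) = (2x)^{1/(x+1)}(1+1/x), has positive logarithmic derivative for x > 4d·log(4d). -/
/-- For every positive integer d and real x > 4d·log(4d), (x+1)² > d·(x+2)·log(2x);
consequently h_d(x) = (x+2)·g(x)^d, with g(x) = (2x)^{1/(x+1)}(1+1/x), has positive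
logarithmic derivative at x. -/
theorem stmt_3 (d : ℕ) (hd : 1 ≤ d) (x : ℝ) (hx : 4 * d * Real.log (4 * d) < x) :
    (d : ℝ) * (x + 2) * Real.log (2 * x) < (x + 1) ^ 2 ∧
    0 < deriv (fun y : ℝ =>
      Real.log ((y + 2) * ((2 * y) ^ (1 / (y + 1)) * (1 + y⁻¹)) ^ d)) x := by
  have hd1 : (1:ℝ) ≤ d := by exact_mod_cast hd
  have hd0 : (0:ℝ) < d := by linarith
  have hlog4 : 1 < Real.log 4 := by
    rw [Real.lt_log_iff_exp_lt (by norm_num)]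
    calc Real.exp 1 < 2.7182818286 := Real.exp_one_lt_d9
    _ < 4 := by norm_num
  have hlog4d : 1 < Real.log (4*d) := by
    refine lt_of_lt_of_le hlog4 (Real.log_le_log (by norm_num) (by linarith))
  have hx4 : 4 < x := by nlinarith
  have hx0 : (0:ℝ) < x := by linarith
  -- key: d * log (2x) < x
  have ht : Real.log (2*x/(8*d)) ≤ 2*x/(8*d) - 1 :=
    Real.log_le_sub_one_of_pos (by positivity)
  have hsplit : Real.log (2*x) = Real.log (2*x/(8*d)) + Real.log (8*d) := by
    rw [← Real.log_mul (by positivity) (by positivity), div_mul_cancel₀]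
    positivity
  have h8d : Real.log (8*(d:ℝ)) = Real.log 2 + Real.log (4*d) := by
    rw [← Real.log_mul (by norm_num) (by positivity)]
    ring_nf
  have hlog2 : Real.log 2 < 1 := by
    calc Real.log 2 < 0.6931471808 := Real.log_two_lt_d9
    _ < 1 := by norm_num
  have e1 : (d:ℝ) * (2*x/(8*d)) = x/4 := by
    field_simp
    ring
  have hkey : (d:ℝ) * Real.log (2*x) < x := by
    have h1 : (d:ℝ) * Real.log (2*x/(8*d)) ≤ x/4 - d := by
      calc (d:ℝ) * Real.log (2*x/(8*d)) ≤ d * (2*x/(8*d) - 1) := by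
            exact mul_le_mul_of_nonneg_left ht hd0.le
      _ = x/4 - d := by rw [mul_sub, e1, mul_one]
    have h2 : (d:ℝ) * Real.log (4*d) < x/4 := by linarith
    have h3 : (d:ℝ) * Real.log (8*d) = d * Real.log 2 + d * Real.log (4*d) := by
      rw [h8d]; ring
    have h4 : (d:ℝ) * Real.log 2 < d := by nlinarith
    calc (d:ℝ) * Real.log (2*x) = d * Real.log (2*x/(8*d)) + d * Real.log (8*d) := by
          rw [hsplit]; ring
    _ < x := by rw [h3]; linarith
  have hlogpos : 0 < Real.log (2*x) := Real.log_pos (by linarith)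
  have part1 : (d : ℝ) * (x + 2) * Real.log (2 * x) < (x + 1) ^ 2 := by
    nlinarith [mul_lt_mul_of_pos_right hkey (show (0:ℝ) < x + 2 by linarith)]
  refine ⟨part1, ?_⟩
  -- rewrite the function near x
  have heq : (fun y : ℝ => Real.log ((y + 2) * ((2 * y) ^ (1 / (y + 1)) * (1 + y⁻¹)) ^ d))
      =ᶠ[nhds x] (fun y : ℝ => Real.log (y+2) +
        (d:ℝ) * ((y+1)⁻¹ * Real.log (2*y) + (Real.log (y+1) - Real.log y))) := by
    filter_upwards [eventually_gt_nhds hx0] with y hy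
    have hy2 : (0:ℝ) < y + 2 := by linarith
    have hrp : (0:ℝ) < (2*y) ^ (1/(y+1)) := Real.rpow_pos_of_pos (by linarith) _
    have hiv : (0:ℝ) < 1 + y⁻¹ := by positivity
    rw [Real.log_mul hy2.ne' (by positivity), Real.log_pow,
      Real.log_mul hrp.ne' hiv.ne', Real.log_rpow (by linarith),
      show (1:ℝ) + y⁻¹ = (y+1)/y by field_simp,
      Real.log_div (by positivity) hy.ne']
    ring
  rw [heq.deriv_eq]
  have hx1 : x + 1 ≠ 0 := by positivity
  have hx2 : x + 2 ≠ 0 := by positivity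
  have H1 : HasDerivAt (fun y : ℝ => Real.log (y+2)) (1/(x+2)) x := by
    simpa using ((hasDerivAt_id x).add_const 2).log hx2
  have H3 : HasDerivAt (fun y : ℝ => Real.log (2*y)) (2/(2*x)) x := by
    simpa using (((hasDerivAt_id x).const_mul 2).log (by positivity))
  have H2 : HasDerivAt (fun y : ℝ => (y+1)⁻¹) (-1/(x+1)^2) x := by
    simpa [Pi.inv_def] using ((hasDerivAt_id x).add_const 1).inv hx1
  have H4 : HasDerivAt (fun y : ℝ => (y+1)⁻¹ * Real.log (2*y))
      (-1/(x+1)^2 * Real.log (2*x) + (x+1)⁻¹ * (2/(2*x))) x := H2.mul H3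
  have H5 : HasDerivAt (fun y : ℝ => Real.log (y+1)) (1/(x+1)) x := by
    simpa using ((hasDerivAt_id x).add_const 1).log hx1
  have H6 : HasDerivAt (fun y : ℝ => Real.log y) x⁻¹ x := Real.hasDerivAt_log hx0.ne'
  have HF : HasDerivAt (fun y : ℝ => Real.log (y+2) +
      (d:ℝ) * ((y+1)⁻¹ * Real.log (2*y) + (Real.log (y+1) - Real.log y)))
      (1/(x+2) + (d:ℝ) * ((-1/(x+1)^2 * Real.log (2*x) + (x+1)⁻¹ * (2/(2*x)))
        + (1/(x+1) - x⁻¹))) x :=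
    H1.add ((H4.add (H5.sub H6)).const_mul (d:ℝ))
  rw [HF.deriv]
  have hval : 1/(x+2) + (d:ℝ) * ((-1/(x+1)^2 * Real.log (2*x) + (x+1)⁻¹ * (2/(2*x)))
      + (1/(x+1) - x⁻¹)) = 1/(x+2) - (d:ℝ) * Real.log (2*x) / (x+1)^2 := by
    field_simp
    ring
  rw [hval, sub_pos, div_lt_div_iff₀ (by positivity) (by positivity)]
  nlinarith [part1]
end

section
/- Comparable versus unit radii: let X be a normed space of dimension d, r > 0 and μ ≥ 1. Then every finite collection 𝒞 of closed balls in X with radii in [r, μr] admits a pairwise disjoint subcollection 𝒮 with |∪𝒮| ≥ μ^{-d}·γ(X)·|∪𝒞|; i.e., Γ(X; [r, μr]) ≥ μ^{-d}·γ(X). -/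
open MeasureTheory Metric Pointwise
open scoped Classical

/-- `ballsUnion μ C` is the measure of the union of the closed balls encoded (center, radius)
by the finite collection `C`. -/
noncomputable def ballsUnion {X : Type*} [NormedAddCommGroup X] [MeasurableSpace X]
    (μ : Measure X) (C : Finset (X × ℝ)) : ℝ :=
  (μ (⋃ p ∈ C, closedBall p.1 p.2)).toReal

/-- A collection of (center, radius) pairs encodes pairwise disjoint closed balls. -/
def DisjointBalls {X : Type*} [NormedAddCommGroup X] (S : Finset (X × ℝ)) : Prop :=
  (S : Set (X × ℝ)).Pairwise fun p q => Disjoint (closedBall p.1 p.2) (closedBall q.1 q.2)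

/-- `Phi μ C` is the largest fraction of the measure of the union of the balls of `C`
occupied by a pairwise disjoint subcollection of `C`. -/
noncomputable def Phi {X : Type*} [NormedAddCommGroup X] [MeasurableSpace X]
    (μ : Measure X) (C : Finset (X × ℝ)) : ℝ :=
  ⨆ S : {S : Finset (X × ℝ) // S ⊆ C ∧ DisjointBalls S},
    ballsUnion μ S.1 / ballsUnion μ C

/-- `vitaliGamma μ S` is the optimal Vitali covering constant `Γ(X; S)` for finite
collections of closed balls with radii in `S`. -/
noncomputable def vitaliGamma {X : Type*} [NormedAddCommGroup X] [MeasurableSpace X]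
    (μ : Measure X) (S : Set ℝ) : ℝ :=
  ⨅ C : {C : Finset (X × ℝ) // C.Nonempty ∧ ∀ p ∈ C, p.2 ∈ S}, Phi μ C.1


set_option linter.unusedSectionVars false
section Aux

variable {X : Type*} [NormedAddCommGroup X] [NormedSpace ℝ X] [FiniteDimensional ℝ X]
    [MeasurableSpace X] [BorelSpace X] (μ : Measure X) [μ.IsAddHaarMeasure]

lemma aux_finite (C : Finset (X × ℝ)) :
    Finite {S : Finset (X × ℝ) // S ⊆ C ∧ DisjointBalls S} := by
  apply Finite.of_injective
    (fun S : {S : Finset (X × ℝ) // S ⊆ C ∧ DisjointBalls S} =>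
      (⟨S.1, Finset.mem_powerset.2 S.2.1⟩ : C.powerset))
  intro a b h
  exact Subtype.ext (by simpa using congrArg Subtype.val h)

lemma aux_nonempty (C : Finset (X × ℝ)) :
    Nonempty {S : Finset (X × ℝ) // S ⊆ C ∧ DisjointBalls S} :=
  ⟨⟨∅, Finset.empty_subset _, by simp [DisjointBalls]⟩⟩

lemma ballsUnion_nonneg (C : Finset (X × ℝ)) : 0 ≤ ballsUnion μ C :=
  ENNReal.toReal_nonneg

lemma aux_ne_top (C : Finset (X × ℝ)) : μ (⋃ p ∈ C, closedBall p.1 p.2) ≠ ⊤ :=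
  (measure_biUnion_lt_top C.finite_toSet fun p _ => measure_closedBall_lt_top).ne

lemma Phi_nonneg (C : Finset (X × ℝ)) : 0 ≤ Phi μ C :=
  Real.iSup_nonneg fun _ => div_nonneg ENNReal.toReal_nonneg ENNReal.toReal_nonneg

lemma vitaliGamma_nonneg (S : Set ℝ) : 0 ≤ vitaliGamma μ S :=
  Real.iInf_nonneg fun _ => Phi_nonneg μ _

lemma vitaliGamma_le_Phi {C : Finset (X × ℝ)} {S : Set ℝ} (hC : C.Nonempty)
    (hrad : ∀ p ∈ C, p.2 ∈ S) : vitaliGamma μ S ≤ Phi μ C := by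
  apply ciInf_le _ (⟨C, hC, hrad⟩ : {C : Finset (X × ℝ) // C.Nonempty ∧ ∀ p ∈ C, p.2 ∈ S})
  exact ⟨0, fun x ⟨i, hi⟩ => hi ▸ Phi_nonneg μ _⟩

lemma ratio_le_Phi {C S : Finset (X × ℝ)} (hS : S ⊆ C) (hd : DisjointBalls S) :
    ballsUnion μ S / ballsUnion μ C ≤ Phi μ C := by
  have : Finite {S : Finset (X × ℝ) // S ⊆ C ∧ DisjointBalls S} := aux_finite C
  exact le_ciSup (f := fun S : {S : Finset (X × ℝ) // S ⊆ C ∧ DisjointBalls S} =>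
      ballsUnion μ S.1 / ballsUnion μ C)
    (Set.Finite.bddAbove (Set.finite_range _)) ⟨S, hS, hd⟩

lemma ballsUnion_image_smul (ρ : ℝ) (hρ : 0 < ρ) (T : Finset (X × ℝ))
    (hT : ∀ q ∈ T, q.2 = 1) :
    ballsUnion μ (T.image fun q => (ρ • q.1, ρ)) = ρ ^ Module.finrank ℝ X * ballsUnion μ T := by
  have hU : (⋃ p ∈ T.image (fun q : X × ℝ => (ρ • q.1, ρ)), closedBall p.1 p.2)
      = ρ • ⋃ q ∈ T, closedBall q.1 q.2 := by
    rw [Finset.set_biUnion_finset_image, Set.smul_set_iUnion₂]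
    refine Set.iUnion₂_congr fun q hq => ?_
    rw [smul_closedBall _ _ (by rw [hT q hq]; norm_num : (0:ℝ) ≤ q.2), hT q hq]
    simp [Real.norm_eq_abs, abs_of_pos hρ]
  rw [ballsUnion, hU, Measure.addHaar_smul_of_nonneg μ hρ.le, ENNReal.toReal_mul,
    ENNReal.toReal_ofReal (by positivity)]
  rfl

/-- constant-radius collections: the disjoint subfamily at fraction `γ(X)`. -/
lemma exists_disjoint_const {ρ : ℝ} (hρ : 0 < ρ) (C : Finset (X × ℝ))
    (hC : ∀ p ∈ C, p.2 = ρ) :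
    ∃ S ⊆ C, DisjointBalls S ∧
      vitaliGamma μ {1} * ballsUnion μ C ≤ ballsUnion μ S := by
  rcases C.eq_empty_or_nonempty with rfl | hne
  · exact ⟨∅, Finset.Subset.refl _, by simp [DisjointBalls],
      by simp [ballsUnion]⟩
  set g : X × ℝ → X × ℝ := fun q => (ρ • q.1, ρ) with hg
  set C₁ : Finset (X × ℝ) := C.image (fun p => (ρ⁻¹ • p.1, (1:ℝ))) with hC₁
  have hC₁rad : ∀ q ∈ C₁, q.2 = 1 := by
    intro q hq
    simp only [hC₁, Finset.mem_image] at hq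
    obtain ⟨p, _, rfl⟩ := hq; rfl
  have hCeq : C₁.image g = C := by
    rw [hC₁, Finset.image_image]
    have : ∀ p ∈ C, (g ∘ fun p : X × ℝ => (ρ⁻¹ • p.1, (1:ℝ))) p = id p := by
      intro p hp
      simp only [Function.comp, g, id]
      rw [smul_inv_smul₀ hρ.ne']
      exact Prod.ext rfl (hC p hp).symm
    rw [Finset.image_congr this, Finset.image_id]
  -- γ ≤ Phi μ C₁ and the sup is attained
  have hfin : Finite {S : Finset (X × ℝ) // S ⊆ C₁ ∧ DisjointBalls S} := aux_finite C₁
  have hnem : Nonempty {S : Finset (X × ℝ) // S ⊆ C₁ ∧ DisjointBalls S} := aux_nonempty C₁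
  obtain ⟨S₀, hS₀⟩ := Finite.exists_max
    (fun S : {S : Finset (X × ℝ) // S ⊆ C₁ ∧ DisjointBalls S} =>
      ballsUnion μ S.1 / ballsUnion μ C₁)
  have hγ : vitaliGamma μ {1} ≤ ballsUnion μ S₀.1 / ballsUnion μ C₁ := by
    refine le_trans (vitaliGamma_le_Phi μ ?_ ?_) (ciSup_le hS₀)
    · exact hne.image _
    · intro p hp; rw [hC₁rad p hp]; rfl
  have hC₁pos : 0 < ballsUnion μ C₁ := by
    obtain ⟨p, hp⟩ := hne
    have hq : (ρ⁻¹ • p.1, (1:ℝ)) ∈ C₁ := Finset.mem_image_of_mem _ hp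
    refine ENNReal.toReal_pos ?_ (aux_ne_top μ C₁)
    refine (measure_closedBall_pos μ (ρ⁻¹ • p.1) one_pos).trans_le
      (measure_mono ?_) |>.ne'
    exact Set.subset_biUnion_of_mem (u := fun q : X × ℝ => closedBall q.1 q.2) hq
  have hmul : vitaliGamma μ {1} * ballsUnion μ C₁ ≤ ballsUnion μ S₀.1 :=
    (le_div_iff₀ hC₁pos).1 hγ
  refine ⟨S₀.1.image g, ?_, ?_, ?_⟩
  · rw [← hCeq]; exact Finset.image_subset_image S₀.2.1
  · -- disjointness
    intro a ha b hb hab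
    simp only [Finset.coe_image, Set.mem_image, Finset.mem_coe] at ha hb
    obtain ⟨q, hq, rfl⟩ := ha
    obtain ⟨q', hq', rfl⟩ := hb
    have hqq : q ≠ q' := by
      rintro rfl; exact hab rfl
    have hdisj := S₀.2.2 (Finset.mem_coe.2 hq) (Finset.mem_coe.2 hq') hqq
    have h1 : closedBall (g q).1 (g q).2 = ρ • closedBall q.1 q.2 := by
      rw [smul_closedBall _ _ (by rw [hC₁rad q (S₀.2.1 hq)]; norm_num : (0:ℝ) ≤ q.2),
        hC₁rad q (S₀.2.1 hq)]
      simp [hg, Real.norm_eq_abs, abs_of_pos hρ]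
    have h2 : closedBall (g q').1 (g q').2 = ρ • closedBall q'.1 q'.2 := by
      rw [smul_closedBall _ _ (by rw [hC₁rad q' (S₀.2.1 hq')]; norm_num : (0:ℝ) ≤ q'.2),
        hC₁rad q' (S₀.2.1 hq')]
      simp [hg, Real.norm_eq_abs, abs_of_pos hρ]
    rw [h1, h2, ← Set.image_smul, ← Set.image_smul]
    exact (Set.disjoint_image_iff (smul_right_injective X hρ.ne')).2 hdisj
  · -- measure bound
    have e1 : ballsUnion μ (S₀.1.image g) = ρ ^ Module.finrank ℝ X * ballsUnion μ S₀.1 :=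
      ballsUnion_image_smul μ ρ hρ S₀.1 (fun q hq => hC₁rad q (S₀.2.1 hq))
    have e2 : ballsUnion μ C = ρ ^ Module.finrank ℝ X * ballsUnion μ C₁ := by
      rw [← hCeq]; exact ballsUnion_image_smul μ ρ hρ C₁ hC₁rad
    rw [e1, e2, mul_left_comm]
    exact mul_le_mul_of_nonneg_left hmul (by positivity)

end Aux

/-- Comparable versus unit radii: if `X` has dimension `d`, `r > 0` and `m ≥ 1`, then every
finite collection of closed balls with radii in `[r, mr]` admits a pairwise disjoint
subcollection occupying a fraction `m^{-d}·γ(X)` of the measure of its union; in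
particular `Γ(X; [r, mr]) ≥ m^{-d}·γ(X)`. -/
theorem stmt_12 {X : Type*} [NormedAddCommGroup X] [NormedSpace ℝ X] [FiniteDimensional ℝ X]
    [MeasurableSpace X] [BorelSpace X] (μ : Measure X) [μ.IsAddHaarMeasure]
    (d : ℕ) (hd : Module.finrank ℝ X = d) (r m : ℝ) (hr : 0 < r) (hm : 1 ≤ m) :
    (∀ C : Finset (X × ℝ), (∀ p ∈ C, p.2 ∈ Set.Icc r (m * r)) →
      ∃ S ⊆ C, DisjointBalls S ∧
        m⁻¹ ^ d * vitaliGamma μ {1} * ballsUnion μ C ≤ ballsUnion μ S) ∧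
    m⁻¹ ^ d * vitaliGamma μ {1} ≤ vitaliGamma μ (Set.Icc r (m * r)) := by
  subst hd
  set n := Module.finrank ℝ X with hn
  set γ := vitaliGamma μ {1} with hγdef
  have hγ0 : 0 ≤ γ := vitaliGamma_nonneg μ _
  have hm0 : 0 < m := lt_of_lt_of_le one_pos hm
  have hminv : 0 ≤ m⁻¹ ^ n := by positivity
  have hρ : 0 < m * r := mul_pos hm0 hr
  have part1 : ∀ C : Finset (X × ℝ), (∀ p ∈ C, p.2 ∈ Set.Icc r (m * r)) →
      ∃ S ⊆ C, DisjointBalls S ∧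
        m⁻¹ ^ n * γ * ballsUnion μ C ≤ ballsUnion μ S := by
    intro C hrad
    rcases C.eq_empty_or_nonempty with rfl | hne
    · exact ⟨∅, Finset.Subset.refl _, by simp [DisjointBalls], by simp [ballsUnion]⟩
    set ρ := m * r with hρdef
    set C' := C.image (fun p : X × ℝ => (p.1, ρ)) with hC'
    have hC'rad : ∀ q ∈ C', q.2 = ρ := by
      intro q hq
      simp only [hC', Finset.mem_image] at hq
      obtain ⟨p, _, rfl⟩ := hq; rfl
    obtain ⟨S', hS'sub, hS'disj, hS'meas⟩ := exists_disjoint_const μ hρ C' hC'rad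
    set f : X × ℝ → X × ℝ := fun q => if h : ∃ p ∈ C, p.1 = q.1 then h.choose else q with hf
    have hfC : ∀ q ∈ S', f q ∈ C ∧ (f q).1 = q.1 := by
      intro q hq
      have hex : ∃ p ∈ C, p.1 = q.1 := by
        have h1 := hS'sub hq
        simp only [hC', Finset.mem_image] at h1
        obtain ⟨p, hp, hpq⟩ := h1
        exact ⟨p, hp, by rw [← hpq]⟩
      rw [hf]; simp only [hex, dif_pos]
      obtain ⟨h1, h2⟩ := hex.choose_spec
      exact ⟨h1, h2⟩
    have hinj : ∀ x ∈ S', ∀ y ∈ S', f x = f y → x = y := by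
      intro x hx y hy hxy
      have h1 := (hfC x hx).2
      have h2 := (hfC y hy).2
      refine Prod.ext ?_ ?_
      · rw [← h1, ← h2, hxy]
      · rw [hC'rad x (hS'sub hx), hC'rad y (hS'sub hy)]
    have hsub : ∀ q ∈ S', closedBall (f q).1 (f q).2 ⊆ closedBall q.1 q.2 := by
      intro q hq
      rw [(hfC q hq).2, hC'rad q (hS'sub hq)]
      exact closedBall_subset_closedBall (hrad _ (hfC q hq).1).2
    have hSdisj : DisjointBalls (S'.image f) := by
      intro a ha b hb hab
      simp only [Finset.coe_image, Set.mem_image, Finset.mem_coe] at ha hb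
      obtain ⟨q, hq, rfl⟩ := ha
      obtain ⟨q', hq', rfl⟩ := hb
      have hne' : q ≠ q' := fun h => hab (by rw [h])
      exact (hS'disj (Finset.mem_coe.2 hq) (Finset.mem_coe.2 hq') hne').mono
        (hsub q hq) (hsub q' hq')
    refine ⟨S'.image f, ?_, hSdisj, ?_⟩
    · intro a ha
      simp only [Finset.mem_image] at ha
      obtain ⟨q, hq, rfl⟩ := ha
      exact (hfC q hq).1
    · -- measure chain
      have hCC' : ballsUnion μ C ≤ ballsUnion μ C' := by
        apply ENNReal.toReal_mono (aux_ne_top μ C')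
        apply measure_mono
        intro x hx
        simp only [Set.mem_iUnion, exists_prop] at hx ⊢
        obtain ⟨p, hp, hxp⟩ := hx
        exact ⟨(p.1, ρ), Finset.mem_image_of_mem _ hp,
          closedBall_subset_closedBall (hrad p hp).2 hxp⟩
      have hmeasS : ballsUnion μ (S'.image f)
          = ∑ q ∈ S', (μ (closedBall (f q).1 (f q).2)).toReal := by
        rw [ballsUnion, measure_biUnion_finset hSdisj
            (fun b _ => measurableSet_closedBall),
          ENNReal.toReal_sum (fun a _ => measure_closedBall_lt_top.ne),
          Finset.sum_image hinj]
      have hterm : ∀ q ∈ S',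
          m⁻¹ ^ n * (μ (closedBall q.1 q.2)).toReal
            ≤ (μ (closedBall (f q).1 (f q).2)).toReal := by
        intro q hq
        have hs := hrad _ (hfC q hq).1
        rw [(hfC q hq).2, hC'rad q (hS'sub hq),
          Measure.addHaar_closedBall _ _ hρ.le,
          Measure.addHaar_closedBall _ _ (hr.le.trans hs.1),
          ENNReal.toReal_mul, ENNReal.toReal_mul,
          ENNReal.toReal_ofReal (pow_nonneg hρ.le _),
          ENNReal.toReal_ofReal (pow_nonneg (hr.le.trans hs.1) _), ← mul_assoc,
          ← mul_pow]
        have h1 : m⁻¹ * ρ = r := by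
          rw [hρdef, ← mul_assoc, inv_mul_cancel₀ hm0.ne', one_mul]
        rw [h1]
        exact mul_le_mul_of_nonneg_right
          (pow_le_pow_left₀ hr.le hs.1 n) ENNReal.toReal_nonneg
      have hS'sum : ballsUnion μ S' ≤ ∑ q ∈ S', (μ (closedBall q.1 q.2)).toReal := by
        rw [ballsUnion, ← ENNReal.toReal_sum (fun a _ => measure_closedBall_lt_top.ne)]
        apply ENNReal.toReal_mono
        · exact (ENNReal.sum_lt_top.2 fun a _ => measure_closedBall_lt_top).ne
        · exact measure_biUnion_finset_le _ _
      calc m⁻¹ ^ n * γ * ballsUnion μ C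
          ≤ m⁻¹ ^ n * γ * ballsUnion μ C' :=
            mul_le_mul_of_nonneg_left hCC' (by positivity)
        _ = m⁻¹ ^ n * (γ * ballsUnion μ C') := by ring
        _ ≤ m⁻¹ ^ n * ballsUnion μ S' :=
            mul_le_mul_of_nonneg_left hS'meas hminv
        _ ≤ m⁻¹ ^ n * ∑ q ∈ S', (μ (closedBall q.1 q.2)).toReal :=
            mul_le_mul_of_nonneg_left hS'sum hminv
        _ = ∑ q ∈ S', m⁻¹ ^ n * (μ (closedBall q.1 q.2)).toReal := Finset.mul_sum _ _ _
        _ ≤ ∑ q ∈ S', (μ (closedBall (f q).1 (f q).2)).toReal := Finset.sum_le_sum hterm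
        _ = ballsUnion μ (S'.image f) := hmeasS.symm
  refine ⟨part1, ?_⟩
  have hnem : Nonempty {C : Finset (X × ℝ) // C.Nonempty ∧ ∀ p ∈ C, p.2 ∈ Set.Icc r (m * r)} := by
    refine ⟨⟨{((0 : X), r)}, Finset.singleton_nonempty _, ?_⟩⟩
    intro p hp
    simp only [Finset.mem_singleton] at hp
    subst hp
    exact ⟨le_refl r, le_mul_of_one_le_left hr.le hm⟩
  rw [vitaliGamma]
  refine le_ciInf fun C => ?_
  obtain ⟨S, hSsub, hSdisj, hSle⟩ := part1 C.1 C.2.2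
  have hpos : 0 < ballsUnion μ C.1 := by
    obtain ⟨p, hp⟩ := C.2.1
    refine ENNReal.toReal_pos ?_ (aux_ne_top μ C.1)
    refine ((measure_closedBall_pos μ p.1 (hr.trans_le (C.2.2 p hp).1)).trans_le
      (measure_mono ?_)).ne'
    exact Set.subset_biUnion_of_mem (u := fun q : X × ℝ => closedBall q.1 q.2) hp
  exact le_trans ((le_div_iff₀ hpos).2 hSle) (ratio_le_Phi μ hSsub hSdisj)
end
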